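/- In the threshold reserve model, a matching that complies with eligibility requirements is Pareto optimal if and only if it is maximal in resource allocation. That is, a matching μ is not Pareto dominated by any eligibility-complying matching if and only if μ matches the maximum possible number of patients among all eligibility-complying matchings. -/

import Mathlib

open scoped Classical

variable {ι κ : Type*} [Fintype ι] [Fintype κ]

/-- Number of patients matched to category `c` under matching `μ`. -/
noncomputable def matchCount (μ : ι → Option κ) (c : κ) : ℕ :=
  (Finset.univ.filter fun i => μ i = some c).card

/-- Number of matched patients under `μ`. -/
noncomputable def matchedCard (μ : ι → Option κ) : ℕ :=
  (Finset.univ.filter fun i => μ i ≠ none).card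

/-- Number of patients matched to a category of which they are a beneficiary. -/
noncomputable def benefCard (B : κ → Finset ι) (μ : ι → Option κ) : ℕ :=
  (Finset.univ.filter fun i => ∃ c, μ i = some c ∧ i ∈ B c).card

/-- `μ` respects the capacity (reserve) of every category. -/
def Caps (r : κ → ℕ) (μ : ι → Option κ) : Prop :=
  ∀ c, matchCount μ c ≤ r c

/-- `μ` complies with eligibility requirements. -/
def Complies (E : κ → Finset ι) (μ : ι → Option κ) : Prop :=
  ∀ i c, μ i = some c → i ∈ E c

/-- `μ` is a feasible eligibility-complying matching. -/
def Valid (r : κ → ℕ) (E : κ → Finset ι) (μ : ι → Option κ) : Prop :=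
  Caps r μ ∧ Complies E μ

/-- `μ` is maximal in resource allocation. -/
def MaxRes (r : κ → ℕ) (E : κ → Finset ι) (μ : ι → Option κ) : Prop :=
  Valid r E μ ∧ ∀ μ', Valid r E μ' → matchedCard μ' ≤ matchedCard μ

/-- `μ` is max-in-max: maximal in resource allocation and maximizing beneficiary
assignments among such matchings. -/
def MaxInMax (r : κ → ℕ) (E B : κ → Finset ι) (μ : ι → Option κ) : Prop :=
  MaxRes r E μ ∧ ∀ μ', MaxRes r E μ' → benefCard B μ' ≤ benefCard B μ
/-- A matching `μ'` Pareto dominates `μ`. -/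
def Dominates (μ μ' : ι → Option κ) : Prop :=
  (∀ i, μ' i = none → μ i = none) ∧ ∃ i, μ i = none ∧ μ' i ≠ none

/-- In the threshold reserve model, an eligibility-complying matching is Pareto optimal
iff it is maximal in resource allocation. -/

lemma matchCount_update (μ : ι → Option κ) {i : ι} {c : κ}
    (hi : μ i = none) (c' : κ) :
    matchCount (Function.update μ i (some c)) c'
      = matchCount μ c' + (if c' = c then 1 else 0) := by
  unfold matchCount
  by_cases h : c' = c
  · subst h
    rw [if_pos rfl]
    have hset : (Finset.univ.filter fun j => Function.update μ i (some c') j = some c')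
        = insert i (Finset.univ.filter fun j => μ j = some c') := by
      ext j
      rcases eq_or_ne j i with rfl | hj
      · simp [hi]
      · simp [Function.update_of_ne hj, hj]
    rw [hset, Finset.card_insert_of_notMem (by simp [hi])]
  · rw [if_neg h]
    have hset : (Finset.univ.filter fun j => Function.update μ i (some c) j = some c')
        = (Finset.univ.filter fun j => μ j = some c') := by
      ext j
      rcases eq_or_ne j i with rfl | hj
      · simp only [Finset.mem_filter, Finset.mem_univ, true_and, Function.update_self, hi]
        constructor
        · intro h'; exact absurd (Option.some.inj h').symm h
        · intro h'; exact nomatch h' 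
      · simp [Function.update_of_ne hj]
    rw [hset]; simp

lemma matchedCard_update (μ : ι → Option κ) {i : ι} {c : κ} (hi : μ i = none) :
    matchedCard (Function.update μ i (some c)) = matchedCard μ + 1 := by
  unfold matchedCard
  have hset : (Finset.univ.filter fun j => Function.update μ i (some c) j ≠ none)
      = insert i (Finset.univ.filter fun j => μ j ≠ none) := by
    ext j
    rcases eq_or_ne j i with rfl | hj
    · simp [hi]
    · simp [Function.update_of_ne hj, hj]
  rw [hset, Finset.card_insert_of_notMem (by simp [hi])]

/-- Key exchange lemma. -/
lemma exchange (r : κ → ℕ) (E : κ → Finset ι) (μ : ι → Option κ) (hμ : Valid r E μ) :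
    ∀ n (μ' : ι → Option κ),
      (Finset.univ.filter fun i => μ i ≠ none ∧ μ' i ≠ μ i).card ≤ n →
      Valid r E μ' → matchedCard μ < matchedCard μ' →
      ∃ μ'', Valid r E μ'' ∧ (∀ i, μ i ≠ none → μ'' i ≠ none) ∧
        matchedCard μ < matchedCard μ'' := by
  intro n
  induction n with
  | zero =>
      intro μ' hΦ hv hlt
      refine ⟨μ', hv, ?_, hlt⟩
      intro i hi
      have : i ∉ (Finset.univ.filter fun i => μ i ≠ none ∧ μ' i ≠ μ i) := by
        have h0 := Finset.card_eq_zero.mp (Nat.le_zero.mp hΦ)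
        simp [h0]
      simp only [Finset.mem_filter, Finset.mem_univ, true_and, not_and, not_not] at this
      rw [this hi]; exact hi
  | succ n ih =>
      intro μ' hΦ hv hlt
      by_cases hex : ∃ i, μ i ≠ none ∧ μ' i = none
      · obtain ⟨i, hi, hi'⟩ := hex
        obtain ⟨c, hc⟩ : ∃ c, μ i = some c := Option.ne_none_iff_exists'.mp hi
        have hiΦ : i ∈ (Finset.univ.filter fun i => μ i ≠ none ∧ μ' i ≠ μ i) := by
          simp [hi, hi', hc]
        by_cases hroom : matchCount μ' c < r c
        · -- case A: room in c, just add i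
          set ν := Function.update μ' i (some c) with hν
          have hcapν : Caps r ν := by
            intro c'
            rw [hν, matchCount_update μ' hi' c']
            by_cases h : c' = c
            · subst h; simpa using hroom
            · simp [h, hv.1 c']
          have hcompν : Complies E ν := by
            intro j c' hj
            rcases eq_or_ne j i with rfl | hji
            · rw [hν, Function.update_self] at hj
              have hcc := Option.some.inj hj; subst hcc; exact hμ.2 _ _ hc
            · rw [hν, Function.update_of_ne hji] at hj; exact hv.2 j c' hj
          have hΦν : (Finset.univ.filter fun j => μ j ≠ none ∧ ν j ≠ μ j).card ≤ n := by
            have hss : (Finset.univ.filter fun j => μ j ≠ none ∧ ν j ≠ μ j)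
                ⊂ (Finset.univ.filter fun j => μ j ≠ none ∧ μ' j ≠ μ j) := by
              constructor
              · intro j hj
                simp only [Finset.mem_filter, Finset.mem_univ, true_and] at hj ⊢
                rcases eq_or_ne j i with rfl | hji
                · exact absurd (by rw [hν, Function.update_self, hc]) hj.2
                · rw [hν, Function.update_of_ne hji] at hj; exact hj
              · intro hsub
                have := hsub hiΦ
                simp only [Finset.mem_filter, Finset.mem_univ, true_and] at this
                exact this.2 (by rw [hν, Function.update_self, hc])
            have := Finset.card_lt_card hss
            omega
          exact ih ν hΦν ⟨hcapν, hcompν⟩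
            (lt_trans hlt (by rw [hν, matchedCard_update μ' hi']; omega))
        · -- case B: c full under μ', swap someone out
          have hj : ∃ j, μ' j = some c ∧ μ j ≠ some c := by
            by_contra hno
            push_neg at hno
            have hsub : (Finset.univ.filter fun j => μ' j = some c)
                ⊆ (Finset.univ.filter fun j => μ j = some c).erase i := by
              intro j hjm
              simp only [Finset.mem_filter, Finset.mem_univ, true_and] at hjm
              have hji : j ≠ i := by rintro rfl; rw [hi'] at hjm; exact nomatch hjm
              exact Finset.mem_erase.mpr ⟨hji, by
                simp only [Finset.mem_filter, Finset.mem_univ, true_and]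
                exact hno j hjm⟩
            have h1 : r c ≤ ((Finset.univ.filter fun j => μ j = some c).erase i).card := by
              calc r c ≤ matchCount μ' c := not_lt.mp hroom
                _ ≤ _ := Finset.card_le_card hsub
            have h2 : ((Finset.univ.filter fun j => μ j = some c).erase i).card
                < (Finset.univ.filter fun j => μ j = some c).card :=
              Finset.card_erase_lt_of_mem (by simp [hc])
            have h3 : matchCount μ c ≤ r c := hμ.1 c
            unfold matchCount at h3
            omega
          obtain ⟨j, hjc, hjμ⟩ := hj
          have hji : j ≠ i := by rintro rfl; exact hjμ hc
          set g := Function.update μ' j none with hg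
          have hgj : g j = none := by rw [hg, Function.update_self]
          have hgi : g i = none := by rw [hg, Function.update_of_ne (Ne.symm hji)]; exact hi'
          have hμ'g : μ' = Function.update g j (some c) := by
            rw [hg, Function.update_idem, ← hjc, Function.update_eq_self]
          set ν := Function.update g i (some c) with hν
          have hcount : ∀ c', matchCount ν c' = matchCount μ' c' := by
            intro c'
            rw [hν, matchCount_update g hgi c', hμ'g, matchCount_update g hgj c']
          have hcard : matchedCard ν = matchedCard μ' := by
            rw [hν, matchedCard_update g hgi, hμ'g, matchedCard_update g hgj]
          have hcapν : Caps r ν := fun c' => (hcount c') ▸ hv.1 c'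
          have hcompν : Complies E ν := by
            intro k c' hk
            rcases eq_or_ne k i with rfl | hki
            · rw [hν, Function.update_self] at hk
              have hcc := Option.some.inj hk; subst hcc; exact hμ.2 _ _ hc
            · rw [hν, Function.update_of_ne hki] at hk
              rcases eq_or_ne k j with rfl | hkj
              · rw [hgj] at hk; exact nomatch hk
              · rw [hg, Function.update_of_ne hkj] at hk; exact hv.2 k c' hk
          have hΦν : (Finset.univ.filter fun k => μ k ≠ none ∧ ν k ≠ μ k).card ≤ n := by
            have hss : (Finset.univ.filter fun k => μ k ≠ none ∧ ν k ≠ μ k)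
                ⊂ (Finset.univ.filter fun k => μ k ≠ none ∧ μ' k ≠ μ k) := by
              constructor
              · intro k hk
                simp only [Finset.mem_filter, Finset.mem_univ, true_and] at hk ⊢
                rcases eq_or_ne k i with rfl | hki
                · exact absurd (by rw [hν, Function.update_self, hc]) hk.2
                · rcases eq_or_ne k j with rfl | hkj
                  · refine ⟨hk.1, ?_⟩
                    rw [hjc]; exact fun h => hjμ h.symm
                  · rw [hν, Function.update_of_ne hki, hg, Function.update_of_ne hkj] at hk
                    exact hk
              · intro hsub
                have := hsub hiΦ
                simp only [Finset.mem_filter, Finset.mem_univ, true_and] at this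
                exact this.2 (by rw [hν, Function.update_self, hc])
            have := Finset.card_lt_card hss
            omega
          exact ih ν hΦν ⟨hcapν, hcompν⟩ (hcard ▸ hlt)
      · push_neg at hex
        refine ⟨μ', hv, ?_, hlt⟩
        exact hex

theorem pareto_iff_maxRes (r : κ → ℕ) (E : κ → Finset ι) (μ : ι → Option κ)
    (hμ : Valid r E μ) :
    (¬ ∃ μ', Valid r E μ' ∧ Dominates μ μ') ↔
      (∀ μ', Valid r E μ' → matchedCard μ' ≤ matchedCard μ) := by
  constructor
  · intro hpo μ' hv
    by_contra hlt
    push_neg at hlt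
    obtain ⟨μ'', hv'', hcov, hlt''⟩ :=
      exchange r E μ hμ _ μ' le_rfl hv hlt
    refine hpo ⟨μ'', hv'', ?_, ?_⟩
    · intro i hi
      by_contra h
      exact (hcov i h) hi
    · by_contra hno
      push_neg at hno
      have hsub : (Finset.univ.filter fun i => μ'' i ≠ none)
          ⊆ (Finset.univ.filter fun i => μ i ≠ none) := by
        intro i hi
        simp only [Finset.mem_filter, Finset.mem_univ, true_and] at hi ⊢
        intro h
        exact hi (hno i h)
      have := Finset.card_le_card hsub
      unfold matchedCard at hlt''
      omega
  · intro hmax ⟨μ', hv, hdom, i, hiμ, hiμ'⟩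
    have hsub : (Finset.univ.filter fun k => μ k ≠ none)
        ⊂ (Finset.univ.filter fun k => μ' k ≠ none) := by
      constructor
      · intro k hk
        simp only [Finset.mem_filter, Finset.mem_univ, true_and] at hk ⊢
        intro h; exact hk (hdom k h)
      · intro hsub
        have : i ∈ (Finset.univ.filter fun k => μ' k ≠ none) := by simp [hiμ']
        have := hsub this
        simp only [Finset.mem_filter, Finset.mem_univ, true_and] at this
        exact this hiμ
    have := Finset.card_lt_card hsub
    have := hmax μ' hv
    unfold matchedCard at *
    omega
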